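/- In the global extension constructed in Vorob'ev's theorem via iterated adhesive extensions, for each i ≥ 2 the conditional independence (X_{R_i} ⊥ X_{(E_1∪…∪E_{i−1})∖S_i} | X_{S_i}) holds, where S_i = E_i ∩ (E_1∪…∪E_{i−1}) and R_i = E_i ∖ S_i. -/

import Mathlib

set_option maxHeartbeats 1000000
set_option linter.unusedSectionVars false


open Finset

variable {ι V : Type} [DecidableEq ι] [Fintype V] [DecidableEq V]

/-- Restriction of an assignment of values on `S` to a subset `T ⊆ S`. -/
def restr {S T : Finset ι} (h : T ⊆ S) (w : ↥S → V) : ↥T → V :=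
  fun i => w ⟨i.1, h i.2⟩

/-- Marginal of a distribution on the variables in `S` to the variables in `T ⊆ S`. -/
noncomputable def marg {S T : Finset ι} (p : (↥S → V) → ℝ) (h : T ⊆ S) :
    (↥T → V) → ℝ :=
  fun z => ∑ w : ↥S → V, if restr h w = z then p w else 0

/-- The running intersection property for the ordered edge list `E 0, …, E (n-1)`. -/
def RIP {n : ℕ} (E : Fin n → Finset ι) : Prop :=
  ∀ i : Fin n, 0 < (i : ℕ) →
    ∃ j : Fin n, j < i ∧
      E i ∩ ((Finset.univ.filter (fun k : Fin n => k < i)).biUnion E) ⊆ E j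

/-- The union of the hyperedges preceding `i` in the ordering. -/
def prevU {n : ℕ} (E : Fin n → Finset ι) (i : Fin n) : Finset ι :=
  (Finset.univ.filter (fun k : Fin n => k < i)).biUnion E

lemma prevU_subset {n : ℕ} (E : Fin n → Finset ι) (i : Fin n) :
    prevU E i ⊆ Finset.univ.biUnion E :=
  Finset.biUnion_subset.mpr fun k _ => Finset.subset_biUnion_of_mem E (Finset.mem_univ k)

lemma edge_subset {n : ℕ} (E : Fin n → Finset ι) (i : Fin n) :
    E i ⊆ Finset.univ.biUnion E :=
  Finset.subset_biUnion_of_mem E (Finset.mem_univ i)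

lemma sep_subset {n : ℕ} (E : Fin n → Finset ι) (i : Fin n) :
    E i ∩ prevU E i ⊆ Finset.univ.biUnion E :=
  Finset.inter_subset_left.trans (edge_subset E i)

lemma upto_subset {n : ℕ} (E : Fin n → Finset ι) (i : Fin n) :
    prevU E i ∪ E i ⊆ Finset.univ.biUnion E :=
  Finset.union_subset (prevU_subset E i) (edge_subset E i)

lemma restr_restr {S T R : Finset ι} (hTS : T ⊆ S) (hRT : R ⊆ T) (hRS : R ⊆ S) (w : ↥S → V) :
    restr hRT (restr hTS w) = restr hRS w := rfl

lemma restr_self {S : Finset ι} (h : S ⊆ S) (w : ↥S → V) : restr h w = w := rfl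

lemma marg_nonneg {S T : Finset ι} (p : (↥S → V) → ℝ) (h : T ⊆ S) (hp : ∀ w, 0 ≤ p w)
    (z : ↥T → V) : 0 ≤ marg p h z := by
  refine Finset.sum_nonneg fun w _ => ?_
  split_ifs
  · exact hp w
  · exact le_refl 0

lemma sum_marg {S T : Finset ι} (p : (↥S → V) → ℝ) (h : T ⊆ S) :
    ∑ z, marg p h z = ∑ w, p w := by
  unfold marg
  rw [Finset.sum_comm]
  exact Finset.sum_congr rfl fun w _ => by rw [Finset.sum_ite_eq]; simp

lemma marg_self {S : Finset ι} (h : S ⊆ S) (p : (↥S → V) → ℝ) : marg p h = p := by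
  funext z
  unfold marg
  exact (Finset.sum_ite_eq' Finset.univ z p).trans (if_pos (Finset.mem_univ z))

lemma le_marg {S T : Finset ι} (p : (↥S → V) → ℝ) (h : T ⊆ S) (hp : ∀ w, 0 ≤ p w)
    (w : ↥S → V) : p w ≤ marg p h (restr h w) := by
  unfold marg
  have hnn : ∀ u ∈ (Finset.univ : Finset (↥S → V)),
      0 ≤ (if restr h u = restr h w then p u else 0) := by
    intro u _
    split_ifs
    · exact hp u
    · exact le_refl 0
  have := Finset.single_le_sum hnn (Finset.mem_univ w)
  simpa using this

lemma marg_marg {S T R : Finset ι} (hTS : T ⊆ S) (hRT : R ⊆ T) (hRS : R ⊆ S)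
    (p : (↥S → V) → ℝ) : marg (marg p hTS) hRT = marg p hRS := by
  funext z
  unfold marg
  have step1 : ∀ y : ↥T → V, (if restr hRT y = z then (∑ w : ↥S → V, if restr hTS w = y then p w else 0) else 0)
      = ∑ w : ↥S → V, (if restr hTS w = y then (if restr hRT y = z then p w else 0) else 0) := by
    intro y
    split_ifs with hy
    · exact Finset.sum_congr rfl fun w _ => by split_ifs <;> simp [hy]
    · symm
      refine Finset.sum_eq_zero fun w _ => by split_ifs <;> simp_all
  rw [Finset.sum_congr rfl fun y _ => step1 y, Finset.sum_comm]
  refine Finset.sum_congr rfl fun w _ => ?_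
  rw [Finset.sum_ite_eq]
  simp only [Finset.mem_univ, if_true]
  rw [restr_restr hTS hRT hRS]

/-- transport a marginal along a mutual inclusion of index sets -/
lemma marg_perm {A T T' : Finset ι} (hT : T ⊆ A) (hT' : T' ⊆ A) (h1 : T ⊆ T') (h2 : T' ⊆ T)
    (p : (↥A → V) → ℝ) (z : ↥T' → V) : marg p hT' z = marg p hT (restr h1 z) := by
  unfold marg
  refine Finset.sum_congr rfl fun w _ => ?_
  congr 1
  apply propext
  constructor
  · intro he; subst he; rfl
  · intro he'
    funext x
    exact congrFun he' ⟨x.1, h2 x.2⟩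

/-- marginals of a reindexed function -/
lemma marg_comp_restr {A B T : Finset ι} (hAB : A ⊆ B) (hBA : B ⊆ A) (hTB : T ⊆ B) (hTA : T ⊆ A)
    (g : (↥A → V) → ℝ) : marg (fun w => g (restr hAB w)) hTB = marg g hTA := by
  funext z
  exact Fintype.sum_equiv ⟨restr hAB, restr hBA, fun w => rfl, fun u => rfl⟩ _ _ (fun w => rfl)

lemma sum_comp_restr {A B : Finset ι} (hAB : A ⊆ B) (hBA : B ⊆ A) (g : (↥A → V) → ℝ) :
    ∑ w : ↥B → V, g (restr hAB w) = ∑ u : ↥A → V, g u :=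
  Fintype.sum_equiv ⟨restr hAB, restr hBA, fun w => rfl, fun u => rfl⟩ _ _ (fun w => rfl)

/-- splitting a sum over assignments on `U = A ∪ B` -/
lemma sum_glue {A B U : Finset ι} (hA : A ⊆ U) (hB : B ⊆ U)
    (hU : ∀ x ∈ U, x ∈ A ∨ x ∈ B) (f : (↥B → V) → ℝ) (z : ↥A → V) :
    (∑ w : ↥U → V, if restr hA w = z then f (restr hB w) else 0)
      = ∑ v : ↥B → V, if restr (inter_subset_right : A ∩ B ⊆ B) v
          = restr (inter_subset_left : A ∩ B ⊆ A) z then f v else 0 := by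
  rw [← Finset.sum_filter, ← Finset.sum_filter]
  refine Finset.sum_bij' (fun w _ => restr hB w)
    (fun v _ => fun x : ↥U => if hx : x.1 ∈ A then z ⟨x.1, hx⟩
      else v ⟨x.1, (hU x.1 x.2).resolve_left hx⟩) ?_ ?_ ?_ ?_ ?_
  · intro w hw
    rw [Finset.mem_filter] at hw ⊢
    refine ⟨Finset.mem_univ _, ?_⟩
    funext x
    have hxA : x.1 ∈ A := Finset.mem_of_mem_inter_left x.2
    have := congrFun hw.2 ⟨x.1, hxA⟩
    exact this
  · intro v hv
    rw [Finset.mem_filter] at hv ⊢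
    refine ⟨Finset.mem_univ _, ?_⟩
    funext x
    show (if hx : x.1 ∈ A then z ⟨x.1, hx⟩ else _) = z x
    rw [dif_pos x.2]
  · intro w hw
    rw [Finset.mem_filter] at hw
    funext x
    show (if hx : x.1 ∈ A then z ⟨x.1, hx⟩ else _) = w x
    split_ifs with hx
    · rw [← hw.2]; rfl
    · rfl
  · intro v hv
    rw [Finset.mem_filter] at hv
    funext x
    show (if hx : x.1 ∈ A then z ⟨x.1, hx⟩ else v _) = v x
    split_ifs with hx
    · have := congrFun hv.2 ⟨x.1, Finset.mem_inter.mpr ⟨hx, x.2⟩⟩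
      exact this.symm
    · rfl
  · intro w hw
    rfl

variable {n : ℕ}

def Um (E : Fin n → Finset ι) (m : ℕ) : Finset ι :=
  (Finset.univ.filter (fun k : Fin n => (k : ℕ) < m)).biUnion E

lemma mem_Um {E : Fin n → Finset ι} {m : ℕ} {x : ι} :
    x ∈ Um E m ↔ ∃ k : Fin n, (k : ℕ) < m ∧ x ∈ E k := by
  simp only [Um, Finset.mem_biUnion, Finset.mem_filter, Finset.mem_univ, true_and]

lemma Um_mono {E : Fin n → Finset ι} {m m' : ℕ} (h : m ≤ m') : Um E m ⊆ Um E m' := by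
  intro x hx
  rcases mem_Um.mp hx with ⟨k, hk, hxk⟩
  exact mem_Um.mpr ⟨k, lt_of_lt_of_le hk h, hxk⟩

lemma prevU_eq_Um {E : Fin n → Finset ι} (i : Fin n) : prevU E i = Um E i.1 := by
  ext x
  simp only [prevU, Um, Finset.mem_biUnion, Finset.mem_filter, Finset.mem_univ, true_and,
    Fin.lt_def]

lemma edge_subset_Um {E : Fin n → Finset ι} (i : Fin n) : E i ⊆ Um E (i.1 + 1) :=
  fun x hx => mem_Um.mpr ⟨i, Nat.lt_succ_self _, hx⟩

lemma sep_subset_Um {E : Fin n → Finset ι} (i : Fin n) :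
    E i ∩ Um E i.1 ⊆ Um E (i.1 + 1) :=
  Finset.inter_subset_right.trans (Um_mono (Nat.le_succ _))

lemma mem_Um_succ {E : Fin n → Finset ι} {m : ℕ} (h : m < n) {x : ι} :
    x ∈ Um E (m + 1) → x ∈ Um E m ∨ x ∈ E ⟨m, h⟩ := by
  intro hx
  rcases mem_Um.mp hx with ⟨k, hk, hxk⟩
  rcases Nat.lt_succ_iff_lt_or_eq.mp hk with hk' | hk'
  · exact Or.inl (mem_Um.mpr ⟨k, hk', hxk⟩)
  · refine Or.inr ?_
    have : k = ⟨m, h⟩ := Fin.ext hk'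
    rwa [this] at hxk

lemma Um_n_eq {E : Fin n → Finset ι} : Finset.univ.biUnion E ⊆ Um E n :=
  fun x hx => by
    rcases Finset.mem_biUnion.mp hx with ⟨k, _, hxk⟩
    exact mem_Um.mpr ⟨k, k.isLt, hxk⟩

noncomputable def Qrec (E : Fin n → Finset ι) (P : (i : Fin n) → ((↥(E i) → V) → ℝ)) :
    (m : ℕ) → (↥(Um E m) → V) → ℝ
  | 0 => fun _ => 1
  | (m + 1) => fun w =>
      if h : m < n then
        Qrec E P m (restr (Um_mono (Nat.le_succ m)) w) *
          P ⟨m, h⟩ (restr (edge_subset_Um ⟨m, h⟩) w) *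
          (marg (P ⟨m, h⟩) (inter_subset_left : E ⟨m, h⟩ ∩ Um E m ⊆ E ⟨m, h⟩)
            (restr (sep_subset_Um ⟨m, h⟩) w))⁻¹
      else Qrec E P m (restr (Um_mono (Nat.le_succ m)) w)

lemma Qrec_succ {E : Fin n → Finset ι} {P : (i : Fin n) → ((↥(E i) → V) → ℝ)}
    (i : Fin n) (w : ↥(Um E (i.1 + 1)) → V) :
    Qrec E P (i.1 + 1) w =
      Qrec E P i.1 (restr (Um_mono (Nat.le_succ i.1)) w) *
        P i (restr (edge_subset_Um i) w) *
        (marg (P i) (inter_subset_left : E i ∩ Um E i.1 ⊆ E i)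
          (restr (sep_subset_Um i) w))⁻¹ := by
  show (if h : i.1 < n then _ else _) = _
  rw [dif_pos i.isLt]

lemma Um_succ_cases {E : Fin n → Finset ι} (i : Fin n) :
    ∀ x ∈ Um E (i.1 + 1), x ∈ Um E i.1 ∨ x ∈ E i := by
  intro x hx
  exact mem_Um_succ i.isLt hx

/-- key step: marginalizing `Qrec (m+1)` back to `Um m` recovers `Qrec m`. -/
lemma marg_succ_prev {E : Fin n → Finset ι} {P : (i : Fin n) → ((↥(E i) → V) → ℝ)}
    (i : Fin n) (hQ0 : ∀ w, 0 ≤ Qrec E P i.1 w)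
    (hCeq : marg (Qrec E P i.1) (inter_subset_right : E i ∩ Um E i.1 ⊆ Um E i.1)
      = marg (P i) inter_subset_left) :
    marg (Qrec E P (i.1 + 1)) (Um_mono (Nat.le_succ i.1)) = Qrec E P i.1 := by
  funext z
  set c : ℝ := marg (P i) (inter_subset_left : E i ∩ Um E i.1 ⊆ E i)
    (restr (inter_subset_right : E i ∩ Um E i.1 ⊆ Um E i.1) z) with hc
  calc marg (Qrec E P (i.1 + 1)) (Um_mono (Nat.le_succ i.1)) z
      = ∑ w : ↥(Um E (i.1 + 1)) → V, if restr (Um_mono (Nat.le_succ i.1)) w = z then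
          (Qrec E P i.1 z * c⁻¹) * P i (restr (edge_subset_Um i) w) else 0 := by
        refine Finset.sum_congr rfl fun w _ => ?_
        split_ifs with hw
        · rw [Qrec_succ i w, ← hw]
          have e1 : restr (inter_subset_right : E i ∩ Um E i.1 ⊆ Um E i.1)
              (restr (Um_mono (Nat.le_succ i.1)) w) = restr (sep_subset_Um i) w := rfl
          rw [hc, ← hw, e1]
          ring
        · rfl
    _ = (Qrec E P i.1 z * c⁻¹) * ∑ w : ↥(Um E (i.1 + 1)) → V,
          if restr (Um_mono (Nat.le_succ i.1)) w = z then P i (restr (edge_subset_Um i) w)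
          else 0 := by
        rw [Finset.mul_sum]
        refine Finset.sum_congr rfl fun w _ => ?_
        rw [mul_ite, mul_zero]
    _ = (Qrec E P i.1 z * c⁻¹) * c := by
        rw [sum_glue (Um_mono (Nat.le_succ i.1)) (edge_subset_Um i) (Um_succ_cases i) (P i) z]
        have e2 : (∑ v : ↥(E i) → V,
            if restr (inter_subset_right : Um E i.1 ∩ E i ⊆ E i) v
              = restr (inter_subset_left : Um E i.1 ∩ E i ⊆ Um E i.1) z then P i v else 0)
            = marg (P i) (inter_subset_right : Um E i.1 ∩ E i ⊆ E i)
              (restr (inter_subset_left : Um E i.1 ∩ E i ⊆ Um E i.1) z) := rfl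
        rw [e2, marg_perm (inter_subset_left : E i ∩ Um E i.1 ⊆ E i)
          (inter_subset_right : Um E i.1 ∩ E i ⊆ E i)
          (fun x hx => by rw [Finset.mem_inter] at hx ⊢; exact ⟨hx.2, hx.1⟩)
          (fun x hx => by rw [Finset.mem_inter] at hx ⊢; exact ⟨hx.2, hx.1⟩)]
        have e3 : restr (fun x hx => by rw [Finset.mem_inter] at hx ⊢; exact ⟨hx.2, hx.1⟩ :
              E i ∩ Um E i.1 ⊆ Um E i.1 ∩ E i)
            (restr (inter_subset_left : Um E i.1 ∩ E i ⊆ Um E i.1) z)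
            = restr (inter_subset_right : E i ∩ Um E i.1 ⊆ Um E i.1) z := rfl
        rw [e3]
    _ = Qrec E P i.1 z := by
        by_cases hc0 : c = 0
        · rw [hc0]
          have h1 : Qrec E P i.1 z ≤ c := by
            rw [hc, ← hCeq]
            have := le_marg (Qrec E P i.1)
              (inter_subset_right : E i ∩ Um E i.1 ⊆ Um E i.1) hQ0 z
            exact this
          have h2 : Qrec E P i.1 z = 0 := le_antisymm (hc0 ▸ h1) (hQ0 z)
          rw [h2]; ring
        · rw [mul_assoc, inv_mul_cancel₀ hc0, mul_one]


/-- key step: marginalizing `Qrec (m+1)` to `E i` recovers `P i`. -/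
lemma marg_succ_edge {E : Fin n → Finset ι} {P : (i : Fin n) → ((↥(E i) → V) → ℝ)}
    (i : Fin n) (hQ0 : ∀ w, 0 ≤ Qrec E P i.1 w) (hP0 : ∀ w, 0 ≤ P i w)
    (hCeq : marg (Qrec E P i.1) (inter_subset_right : E i ∩ Um E i.1 ⊆ Um E i.1)
      = marg (P i) inter_subset_left) :
    marg (Qrec E P (i.1 + 1)) (edge_subset_Um i) = P i := by
  funext v
  set c : ℝ := marg (P i) (inter_subset_left : E i ∩ Um E i.1 ⊆ E i)
    (restr (inter_subset_left : E i ∩ Um E i.1 ⊆ E i) v) with hc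
  calc marg (Qrec E P (i.1 + 1)) (edge_subset_Um i) v
      = ∑ w : ↥(Um E (i.1 + 1)) → V, if restr (edge_subset_Um i) w = v then
          (P i v * c⁻¹) * Qrec E P i.1 (restr (Um_mono (Nat.le_succ i.1)) w) else 0 := by
        refine Finset.sum_congr rfl fun w _ => ?_
        split_ifs with hw
        · rw [Qrec_succ i w, ← hw]
          have e1 : restr (inter_subset_left : E i ∩ Um E i.1 ⊆ E i)
              (restr (edge_subset_Um i) w) = restr (sep_subset_Um i) w := rfl
          rw [hc, ← hw, e1]
          ring
        · rfl
    _ = (P i v * c⁻¹) * ∑ w : ↥(Um E (i.1 + 1)) → V,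
          if restr (edge_subset_Um i) w = v then
            Qrec E P i.1 (restr (Um_mono (Nat.le_succ i.1)) w) else 0 := by
        rw [Finset.mul_sum]
        refine Finset.sum_congr rfl fun w _ => ?_
        rw [mul_ite, mul_zero]
    _ = (P i v * c⁻¹) * c := by
        rw [sum_glue (edge_subset_Um i) (Um_mono (Nat.le_succ i.1))
          (fun x hx => (Um_succ_cases i x hx).symm) (Qrec E P i.1) v]
        have e2 : (∑ u : ↥(Um E i.1) → V,
            if restr (inter_subset_right : E i ∩ Um E i.1 ⊆ Um E i.1) u
              = restr (inter_subset_left : E i ∩ Um E i.1 ⊆ E i) v then Qrec E P i.1 u else 0)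
            = marg (Qrec E P i.1) (inter_subset_right : E i ∩ Um E i.1 ⊆ Um E i.1)
              (restr (inter_subset_left : E i ∩ Um E i.1 ⊆ E i) v) := rfl
        rw [e2, hCeq]
    _ = P i v := by
        by_cases hc0 : c = 0
        · rw [hc0]
          have h1 : P i v ≤ c := by
            rw [hc]
            exact le_marg (P i) (inter_subset_left : E i ∩ Um E i.1 ⊆ E i) hP0 v
          have h2 : P i v = 0 := le_antisymm (hc0 ▸ h1) (hP0 v)
          rw [h2]; ring
        · rw [mul_assoc, inv_mul_cancel₀ hc0, mul_one]

/-- the separator marginal of `Qrec m` agrees with the separator marginal of `P i`. -/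
lemma margS_eq {E : Fin n → Finset ι} {P : (i : Fin n) → ((↥(E i) → V) → ℝ)}
    (hRIP : RIP E) (h1 : ∀ i, ∑ w, P i w = 1)
    (hcons : ∀ i j : Fin n,
      marg (P i) (inter_subset_left : E i ∩ E j ⊆ E i) =
      marg (P j) (inter_subset_right : E i ∩ E j ⊆ E j))
    (i : Fin n)
    (ihm : ∀ k : Fin n, (k : ℕ) < i.1 → ∀ (hk : E k ⊆ Um E i.1),
      marg (Qrec E P i.1) hk = P k)
    (ihsum : ∑ w, Qrec E P i.1 w = 1) :
    marg (Qrec E P i.1) (inter_subset_right : E i ∩ Um E i.1 ⊆ Um E i.1)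
      = marg (P i) inter_subset_left := by
  by_cases hm0 : (i : ℕ) = 0
  · funext z
    have hSempty : ∀ x : ι, x ∈ E i ∩ Um E i.1 → False := by
      intro x hx
      rcases mem_Um.mp (Finset.mem_of_mem_inter_right hx) with ⟨k, hk, _⟩
      omega
    have hz1 : ∀ w : ↥(Um E i.1) → V,
        restr (inter_subset_right : E i ∩ Um E i.1 ⊆ Um E i.1) w = z := by
      intro w; funext x; exact absurd x.2 (fun h => hSempty x.1 h)
    have hz2 : ∀ v : ↥(E i) → V,
        restr (inter_subset_left : E i ∩ Um E i.1 ⊆ E i) v = z := by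
      intro v; funext x; exact absurd x.2 (fun h => hSempty x.1 h)
    unfold marg
    rw [Finset.sum_congr rfl fun w _ => if_pos (hz1 w),
      Finset.sum_congr rfl fun v _ => if_pos (hz2 v), ihsum, h1 i]
  · obtain ⟨j, hji, hsub⟩ := hRIP i (Nat.pos_of_ne_zero hm0)
    have hsub' : E i ∩ Um E i.1 ⊆ E j := by
      intro x hx
      refine hsub ?_
      rw [Finset.mem_inter] at hx ⊢
      refine ⟨hx.1, ?_⟩
      rcases mem_Um.mp hx.2 with ⟨k, hk, hxk⟩
      exact Finset.mem_biUnion.mpr ⟨k, Finset.mem_filter.mpr ⟨Finset.mem_univ _, hk⟩, hxk⟩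
    have hjm : (j : ℕ) < i.1 := hji
    have hEj : E j ⊆ Um E i.1 := fun x hx => mem_Um.mpr ⟨j, hjm, hx⟩
    have hSEiEj : E i ∩ Um E i.1 ⊆ E i ∩ E j :=
      Finset.subset_inter Finset.inter_subset_left hsub'
    calc marg (Qrec E P i.1) (inter_subset_right : E i ∩ Um E i.1 ⊆ Um E i.1)
        = marg (marg (Qrec E P i.1) hEj) hsub' := (marg_marg hEj hsub' _ _).symm
      _ = marg (P j) hsub' := by rw [ihm j hjm hEj]
      _ = marg (marg (P j) (inter_subset_right : E i ∩ E j ⊆ E j)) hSEiEj :=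
          (marg_marg _ _ _ _).symm
      _ = marg (marg (P i) (inter_subset_left : E i ∩ E j ⊆ E i)) hSEiEj := by
          rw [hcons i j]
      _ = marg (P i) inter_subset_left := marg_marg _ _ _ _

lemma Qinv {E : Fin n → Finset ι} {P : (i : Fin n) → ((↥(E i) → V) → ℝ)}
    (hRIP : RIP E) (h0 : ∀ i w, 0 ≤ P i w) (h1 : ∀ i, ∑ w, P i w = 1)
    (hcons : ∀ i j : Fin n,
      marg (P i) (inter_subset_left : E i ∩ E j ⊆ E i) =
      marg (P j) (inter_subset_right : E i ∩ E j ⊆ E j)) :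
    ∀ m : ℕ, m ≤ n →
      (∀ w, 0 ≤ Qrec E P m w) ∧ (∑ w, Qrec E P m w = 1) ∧
      (∀ k : Fin n, (k : ℕ) < m → ∀ (hk : E k ⊆ Um E m), marg (Qrec E P m) hk = P k) := by
  intro m
  induction m with
  | zero =>
    intro _
    refine ⟨fun w => zero_le_one, ?_, fun k hk => absurd hk (Nat.not_lt_zero _)⟩
    have hempty : IsEmpty ↥(Um E 0) :=
      ⟨fun x => by rcases mem_Um.mp x.2 with ⟨k, hk, _⟩; omega⟩
    show ∑ _w : ↥(Um E 0) → V, (1 : ℝ) = 1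
    haveI : Unique (↥(Um E 0) → V) := Pi.uniqueOfIsEmpty _
    rw [Finset.sum_const, Finset.card_univ, Fintype.card_unique]
    simp
  | succ m ih =>
    intro hm1
    have hmn : m < n := hm1
    obtain ⟨ih0, ihsum, ihmarg⟩ := ih (le_of_lt hmn)
    set i : Fin n := ⟨m, hmn⟩ with hidef
    have hCeq := margS_eq hRIP h1 hcons i ihmarg ihsum
    have hprev := marg_succ_prev i ih0 hCeq
    have hedge := marg_succ_edge i ih0 (h0 i) hCeq
    refine ⟨?_, ?_, ?_⟩
    · intro w
      rw [Qrec_succ i w]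
      exact mul_nonneg (mul_nonneg (ih0 _) (h0 i _))
        (inv_nonneg.mpr (marg_nonneg _ _ (h0 i) _))
    · calc ∑ w, Qrec E P (m + 1) w
          = ∑ z, marg (Qrec E P (m + 1)) (Um_mono (Nat.le_succ m)) z := (sum_marg _ _).symm
        _ = ∑ z, Qrec E P m z := by rw [hprev]
        _ = 1 := ihsum
    · intro k hk hEk
      rcases Nat.lt_succ_iff_lt_or_eq.mp hk with hk' | hk'
      · have hEk' : E k ⊆ Um E m := fun x hx => mem_Um.mpr ⟨k, hk', hx⟩
        calc marg (Qrec E P (m + 1)) hEk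
            = marg (marg (Qrec E P (m + 1)) (Um_mono (Nat.le_succ m))) hEk' :=
              (marg_marg _ _ _ _).symm
          _ = marg (Qrec E P m) hEk' := by rw [hprev]
          _ = P k := ihmarg k hk' hEk'
      · have hki : k = i := Fin.ext hk'
        subst hki
        exact hedge
    
lemma marg_telescope {E : Fin n → Finset ι} {P : (i : Fin n) → ((↥(E i) → V) → ℝ)}
    (hRIP : RIP E) (h0 : ∀ i w, 0 ≤ P i w) (h1 : ∀ i, ∑ w, P i w = 1)
    (hcons : ∀ i j : Fin n,
      marg (P i) (inter_subset_left : E i ∩ E j ⊆ E i) =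
      marg (P j) (inter_subset_right : E i ∩ E j ⊆ E j)) :
    ∀ m m' : ℕ, m ≤ m' → m' ≤ n → ∀ (h : Um E m ⊆ Um E m'),
      marg (Qrec E P m') h = Qrec E P m := by
  intro m m' hmm'
  induction m', hmm' using Nat.le_induction with
  | base =>
    intro _ h
    exact marg_self h _
  | succ m' hm IH =>
    intro hm'1n h
    have hm'n : m' < n := hm'1n
    obtain ⟨H0, Hsum, Hmarg⟩ := Qinv hRIP h0 h1 hcons m' (le_of_lt hm'n)
    have hCeq := margS_eq hRIP h1 hcons ⟨m', hm'n⟩ Hmarg Hsum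
    have hprev := marg_succ_prev ⟨m', hm'n⟩ H0 hCeq
    calc marg (Qrec E P (m' + 1)) h
        = marg (marg (Qrec E P (m' + 1)) (Um_mono (Nat.le_succ m'))) (Um_mono hm) :=
          (marg_marg (Um_mono (Nat.le_succ m')) (Um_mono hm) h _).symm
      _ = marg (Qrec E P m') (Um_mono hm) := by rw [hprev]
      _ = Qrec E P m := IH (le_of_lt hm'n) _

/-- In the global extension constructed in Vorob'ev's theorem via iterated adhesive
extensions, for each `i ≥ 2` the conditional independence
`(X_{R_i} ⊥ X_{(E_1∪…∪E_{i−1})∖S_i} | X_{S_i})` holds, where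
`S_i = E_i ∩ (E_1∪…∪E_{i−1})` and `R_i = E_i ∖ S_i`; since `R_i ∪ S_i = E_i` and
`((E_1∪…∪E_{i−1})∖S_i) ∪ S_i = E_1∪…∪E_{i−1}`, this is stated via the factorization of
the marginal on `E_1∪…∪E_i` into the conditionals of `E_i` and `E_1∪…∪E_{i−1}`
given `S_i`. -/
theorem vorobev_extension_conditional_independence {n : ℕ}
    (E : Fin n → Finset ι) (hRIP : RIP E)
    (P : (i : Fin n) → ((↥(E i) → V) → ℝ))
    (h0 : ∀ i w, 0 ≤ P i w) (h1 : ∀ i, ∑ w, P i w = 1)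
    (hcons : ∀ i j : Fin n,
      marg (P i) (inter_subset_left : E i ∩ E j ⊆ E i) =
      marg (P j) (inter_subset_right : E i ∩ E j ⊆ E j)) :
    ∃ Q : (↥(Finset.univ.biUnion E) → V) → ℝ,
      (∀ w, 0 ≤ Q w) ∧ (∑ w, Q w = 1) ∧
      (∀ i : Fin n,
        marg Q (Finset.subset_biUnion_of_mem E (Finset.mem_univ i)) = P i) ∧
      ∀ i : Fin n, 0 < (i : ℕ) →
        ∀ w : ↥(Finset.univ.biUnion E) → V,
          marg Q (upto_subset E i) (restr (upto_subset E i) w) =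
            (marg Q (edge_subset E i) (restr (edge_subset E i) w) /
              marg Q (sep_subset E i) (restr (sep_subset E i) w)) *
            (marg Q (prevU_subset E i) (restr (prevU_subset E i) w) /
              marg Q (sep_subset E i) (restr (sep_subset E i) w)) *
            marg Q (sep_subset E i) (restr (sep_subset E i) w) := by
  have hbig1 : Um E n ⊆ Finset.univ.biUnion E := fun x hx => by
    rcases mem_Um.mp hx with ⟨k, _, hxk⟩
    exact Finset.mem_biUnion.mpr ⟨k, Finset.mem_univ k, hxk⟩
  have hbig2 : Finset.univ.biUnion E ⊆ Um E n := Um_n_eq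
  obtain ⟨HN0, HNsum, HNmarg⟩ := Qinv hRIP h0 h1 hcons n le_rfl
  set Q : (↥(Finset.univ.biUnion E) → V) → ℝ := fun w => Qrec E P n (restr hbig1 w) with hQ
  have hmargall : ∀ k : Fin n,
      marg Q (Finset.subset_biUnion_of_mem E (Finset.mem_univ k)) = P k := by
    intro k
    have hEk : E k ⊆ Um E n := fun x hx => mem_Um.mpr ⟨k, k.isLt, hx⟩
    have e := marg_comp_restr hbig1 hbig2
      (Finset.subset_biUnion_of_mem E (Finset.mem_univ k)) hEk (Qrec E P n)
    rw [hQ, e]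
    exact HNmarg k k.isLt hEk
  refine ⟨Q, fun w => HN0 _, ?_, hmargall, ?_⟩
  · rw [hQ]
    exact (sum_comp_restr hbig1 hbig2 (Qrec E P n)).trans HNsum
  · intro i hi w
    obtain ⟨Hm0, Hmsum, Hmmarg⟩ := Qinv hRIP h0 h1 hcons i.1 (le_of_lt i.isLt)
    have hCeq := margS_eq hRIP h1 hcons i Hmmarg Hmsum
    have hprevUm : prevU E i ⊆ Um E i.1 := by rw [prevU_eq_Um i]
    have hUmprev : Um E i.1 ⊆ prevU E i := by rw [prevU_eq_Um i]
    have hupUm : prevU E i ∪ E i ⊆ Um E (i.1 + 1) :=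
      Finset.union_subset (hprevUm.trans (Um_mono (Nat.le_succ _))) (edge_subset_Um i)
    have hUmup : Um E (i.1 + 1) ⊆ prevU E i ∪ E i := fun x hx => by
      rcases Um_succ_cases i x hx with h | h
      · exact Finset.mem_union.mpr (Or.inl (hUmprev h))
      · exact Finset.mem_union.mpr (Or.inr h)
    have hsepS : E i ∩ prevU E i ⊆ E i ∩ Um E i.1 :=
      Finset.inter_subset_inter Finset.Subset.rfl hprevUm
    have hSsep : E i ∩ Um E i.1 ⊆ E i ∩ prevU E i :=
      Finset.inter_subset_inter Finset.Subset.rfl hUmprev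
    have hUmmUmn : Um E i.1 ⊆ Um E n := Um_mono (le_of_lt i.isLt)
    have hUm1Umn : Um E (i.1 + 1) ⊆ Um E n := Um_mono i.isLt
    have hupUmn : prevU E i ∪ E i ⊆ Um E n := hupUm.trans hUm1Umn
    have hSUmn : E i ∩ Um E i.1 ⊆ Um E n := Finset.inter_subset_right.trans hUmmUmn
    have hsepUmn : E i ∩ prevU E i ⊆ Um E n := hsepS.trans hSUmn
    have hprevUmn : prevU E i ⊆ Um E n := hprevUm.trans hUmmUmn
    have hUmmBig : Um E i.1 ⊆ Finset.univ.biUnion E := hUmmUmn.trans hbig1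
    have hSBig : E i ∩ Um E i.1 ⊆ Finset.univ.biUnion E := hSUmn.trans hbig1
    have hUm1Big : Um E (i.1 + 1) ⊆ Finset.univ.biUnion E := hUm1Umn.trans hbig1
    have h_edge : marg Q (edge_subset E i) (restr (edge_subset E i) w)
        = P i (restr (edge_subset E i) w) :=
      congrFun (hmargall i) (restr (edge_subset E i) w)
    have h_prev : marg Q (prevU_subset E i) (restr (prevU_subset E i) w)
        = Qrec E P i.1 (restr hUmmBig w) := by
      have e := marg_comp_restr hbig1 hbig2 (prevU_subset E i) hprevUmn (Qrec E P n)
      rw [hQ, e, marg_perm hUmmUmn hprevUmn hUmprev hprevUm (Qrec E P n)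
        (restr (prevU_subset E i) w),
        marg_telescope hRIP h0 h1 hcons i.1 n (le_of_lt i.isLt) le_rfl hUmmUmn]
      exact congrArg _ (restr_restr (prevU_subset E i) hUmprev hUmmBig w)
    have h_sep : marg Q (sep_subset E i) (restr (sep_subset E i) w)
        = marg (P i) (inter_subset_left : E i ∩ Um E i.1 ⊆ E i) (restr hSBig w) := by
      have e := marg_comp_restr hbig1 hbig2 (sep_subset E i) hsepUmn (Qrec E P n)
      rw [hQ, e, marg_perm hSUmn hsepUmn hSsep hsepS (Qrec E P n)
        (restr (sep_subset E i) w),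
        ← marg_marg hUmmUmn (inter_subset_right : E i ∩ Um E i.1 ⊆ Um E i.1) hSUmn
          (Qrec E P n),
        marg_telescope hRIP h0 h1 hcons i.1 n (le_of_lt i.isLt) le_rfl hUmmUmn, hCeq]
      exact congrArg _ (restr_restr (sep_subset E i) hSsep hSBig w)
    have h_up : marg Q (upto_subset E i) (restr (upto_subset E i) w)
        = Qrec E P (i.1 + 1) (restr hUm1Big w) := by
      have e := marg_comp_restr hbig1 hbig2 (upto_subset E i) hupUmn (Qrec E P n)
      rw [hQ, e, marg_perm hUm1Umn hupUmn hUmup hupUm (Qrec E P n)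
        (restr (upto_subset E i) w),
        marg_telescope hRIP h0 h1 hcons (i.1 + 1) n i.isLt le_rfl hUm1Umn]
      exact congrArg _ (restr_restr (upto_subset E i) hUmup hUm1Big w)
    rw [h_up, h_edge, h_prev, h_sep, Qrec_succ i (restr hUm1Big w)]
    have r1 : restr (Um_mono (Nat.le_succ i.1)) (restr hUm1Big w) = restr hUmmBig w := rfl
    have r2 : restr (edge_subset_Um i) (restr hUm1Big w) = restr (edge_subset E i) w := rfl
    have r3 : restr (sep_subset_Um i) (restr hUm1Big w) = restr hSBig w := rfl
    rw [r1, r2, r3]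
    set a := Qrec E P i.1 (restr hUmmBig w)
    set p := P i (restr (edge_subset E i) w)
    set c := marg (P i) (inter_subset_left : E i ∩ Um E i.1 ⊆ E i) (restr hSBig w)
    by_cases hc0 : c = 0
    · simp [hc0]
    · field_simp
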